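/- Let n ∈ ℤ and let α ∈ ℝ, and set z := e^{iα}. Then the principal value limit lim_{ε → 0⁺} (1/(2πi)) ∫_{{θ ∈ [0, 2π] : |e^{iθ} − z| ≥ ε}} e^{inθ} · (i e^{iθ})/(e^{iθ} − z) dθ exists and equals (1/2)·e^{inα} if n ≥ 0, and equals −(1/2)·e^{inα} if n < 0. -/

import Mathlib

open Set Complex Real Filter MeasureTheory

noncomputable section
namespace HTaux

def w (θ : ℝ) : ℂ := Complex.exp (θ * Complex.I)

lemma w_ne_zero (θ : ℝ) : w θ ≠ 0 := Complex.exp_ne_zero _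

lemma abs_w (θ : ℝ) : ‖w θ‖ = 1 := by
  simp [w, Complex.norm_exp]

lemma continuous_w : Continuous w :=
  Complex.continuous_exp.comp (Complex.continuous_ofReal.mul continuous_const)

lemma w_add_two_pi (θ : ℝ) : w (θ + 2 * π) = w θ := by
  unfold w
  have h : ((θ + 2 * π : ℝ) : ℂ) * Complex.I = θ * Complex.I + 2 * π * Complex.I := by
    push_cast; ring
  rw [h, Complex.exp_add, Complex.exp_two_pi_mul_I, mul_one]

lemma w_reflect (α θ : ℝ) : w (2 * α - θ) = w α * w α / w θ := by
  unfold w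
  rw [← Complex.exp_add, ← Complex.exp_sub]
  congr 1
  push_cast; ring

def Cset (α ε : ℝ) : Set ℝ := {θ | ε ≤ ‖w θ - w α‖}

lemma measurableSet_Cset (α ε : ℝ) : MeasurableSet (Cset α ε) := by
  have h : Continuous fun θ : ℝ => ‖w θ - w α‖ :=
    (continuous_w.sub continuous_const).norm
  exact (isClosed_le continuous_const h).measurableSet

lemma ae_ne (α : ℝ) : ∀ᵐ θ : ℝ, w θ ≠ w α := by
  rw [ae_iff]
  apply measure_mono_null (t := Set.range (fun k : ℤ => α + k * (2 * π)))
  · intro θ hθ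
    have hθ' : w θ = w α := not_not.mp hθ
    rw [w, w, Complex.exp_eq_exp_iff_exists_int] at hθ'
    obtain ⟨k, hk⟩ := hθ'
    refine ⟨k, ?_⟩
    have h2 : ((α + k * (2 * π) : ℝ) : ℂ) * Complex.I = (θ : ℂ) * Complex.I := by
      push_cast
      linear_combination -hk
    have h3 := mul_right_cancel₀ Complex.I_ne_zero h2
    exact_mod_cast h3
  · exact (Set.countable_range _).measure_zero _

lemma tendsto_integral_indicator (α a b : ℝ) (g : ℝ → ℂ) (hg : Continuous g) :
    Tendsto (fun ε : ℝ => ∫ θ in a..b, Set.indicator (Cset α ε) g θ)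
      (nhdsWithin 0 (Ioi 0)) (nhds (∫ θ in a..b, g θ)) := by
  apply intervalIntegral.tendsto_integral_filter_of_dominated_convergence
    (bound := fun θ => ‖g θ‖)
  · filter_upwards with ε
    exact ((hg.stronglyMeasurable.indicator (measurableSet_Cset α ε))).aestronglyMeasurable
  · filter_upwards with ε
    filter_upwards with θ _
    exact norm_indicator_le_norm_self _ _
  · exact hg.norm.intervalIntegrable a b
  · filter_upwards [ae_ne α] with θ hθ _
    have hpos : 0 < ‖w θ - w α‖ := by
      rw [norm_pos_iff]
      exact sub_ne_zero.mpr hθ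
    apply tendsto_const_nhds.congr'
    filter_upwards [Ioo_mem_nhdsGT_of_mem (Set.left_mem_Ico.mpr hpos)] with ε hε
    exact (Set.indicator_of_mem (show θ ∈ Cset α ε from le_of_lt hε.2) g).symm


lemma intervalIntegrable_of_bounded {f : ℝ → ℂ} {a b M : ℝ}
    (hf : AEStronglyMeasurable f (volume.restrict (Set.uIoc a b))) (h : ∀ θ, ‖f θ‖ ≤ M) :
    IntervalIntegrable f volume a b := by
  rw [intervalIntegrable_iff]
  have hM : IntegrableOn (fun _ : ℝ => M) (Set.uIoc a b) := by
    refine integrableOn_const ?_ enorm_ne_top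
    rw [Set.uIoc]
    exact measure_Ioc_lt_top.ne
  exact hM.mono' hf (ae_of_all _ h)

def g (α : ℝ) : ℝ → ℂ := fun θ => Complex.I * w θ / (w θ - w α)

lemma measurable_g (α : ℝ) : Measurable (g α) :=
  (measurable_const.mul continuous_w.measurable).div
    (continuous_w.sub continuous_const).measurable

lemma norm_indicator_g_le (α : ℝ) {ε : ℝ} (hε : 0 < ε) (θ : ℝ) :
    ‖Set.indicator (Cset α ε) (g α) θ‖ ≤ 1 / ε := by
  by_cases hc : θ ∈ Cset α ε
  · rw [Set.indicator_of_mem hc]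
    have hmem : ε ≤ ‖w θ - w α‖ := hc
    have : ‖g α θ‖ = 1 / ‖w θ - w α‖ := by
      rw [g]
      simp only [norm_div, norm_mul, Complex.norm_I, abs_w, one_mul, mul_one]
    rw [this]
    exact one_div_le_one_div_of_le hε hmem
  · rw [Set.indicator_of_notMem hc]
    simp
    positivity

lemma notmem_Cset {α ε : ℝ} (hε : 0 < ε) {θ : ℝ} (h : w θ = w α) : θ ∉ Cset α ε := by
  intro hc
  have : ε ≤ ‖w θ - w α‖ := hc
  rw [h, sub_self, norm_zero] at this
  exact absurd (lt_of_lt_of_le hε this) (lt_irrefl 0)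

lemma abs_reflect (α θ : ℝ) :
    ‖w (2 * α - θ) - w α‖ = ‖w θ - w α‖ := by
  rw [w_reflect]
  have h : w α * w α / w θ - w α = w α * (w α - w θ) / w θ := by
    field_simp [w_ne_zero]
  rw [h, norm_div, norm_mul, abs_w, abs_w, one_mul, div_one, ← norm_neg, neg_sub]

lemma key (α : ℝ) {ε : ℝ} (hε : 0 < ε) :
    ∫ θ in (0:ℝ)..(2*π), Set.indicator (Cset α ε) (g α) θ
      = Complex.I / 2 * ∫ θ in (α-π)..(α+π), Set.indicator (Cset α ε) (fun _ => (1:ℂ)) θ := by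
  set F : ℝ → ℂ := Set.indicator (Cset α ε) (g α) with hF
  have hper : Function.Periodic F (2*π) := by
    intro θ
    simp only [hF, Set.indicator_apply, Cset, mem_setOf_eq, g, w_add_two_pi]
  have h1 : ∫ θ in (0:ℝ)..(2*π), F θ = ∫ θ in (α-π)..(α+π), F θ := by
    have h := hper.intervalIntegral_add_eq 0 (α - π)
    rw [zero_add, show α - π + 2*π = α + π by ring] at h
    exact h
  have hFmeas : Measurable F := (measurable_g α).indicator (measurableSet_Cset α ε)
  have hFbd : ∀ θ, ‖F θ‖ ≤ 1 / ε := norm_indicator_g_le α hε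
  have hFint : IntervalIntegrable F volume (α-π) (α+π) :=
    intervalIntegrable_of_bounded hFmeas.aestronglyMeasurable.restrict hFbd
  have hFrefl_int : IntervalIntegrable (fun θ => F (2*α - θ)) volume (α-π) (α+π) :=
    intervalIntegrable_of_bounded
      ((hFmeas.comp (measurable_const_sub _)).aestronglyMeasurable.restrict)
      (fun θ => hFbd _)
  have hrefl : ∫ θ in (α-π)..(α+π), F (2*α - θ) = ∫ θ in (α-π)..(α+π), F θ := by
    rw [intervalIntegral.integral_comp_sub_left F (2*α)]
    have e1 : 2*α - (α+π) = α - π := by ring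
    have e2 : 2*α - (α-π) = α + π := by ring
    rw [e1, e2]
  have hpt : ∀ θ : ℝ, F θ + F (2*α - θ)
      = Complex.I * Set.indicator (Cset α ε) (fun _ => (1:ℂ)) θ := by
    intro θ
    by_cases hz : w θ = w α
    · have h2 : w (2*α - θ) = w α := by
        rw [w_reflect, hz, mul_div_assoc, div_self (w_ne_zero α), mul_one]
      rw [hF, Set.indicator_of_notMem (notmem_Cset hε hz),
        Set.indicator_of_notMem (notmem_Cset hε h2),
        Set.indicator_of_notMem (notmem_Cset hε hz)]
      simp
    · have hmem : (2*α - θ) ∈ Cset α ε ↔ θ ∈ Cset α ε := by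
        simp only [Cset, mem_setOf_eq, abs_reflect]
      by_cases hc : θ ∈ Cset α ε
      · rw [hF, Set.indicator_of_mem hc, Set.indicator_of_mem (hmem.mpr hc),
          Set.indicator_of_mem hc]
        have hx := w_ne_zero θ
        have hz' := w_ne_zero α
        have hsub : w θ - w α ≠ 0 := sub_ne_zero.mpr hz
        have hsub2 : w α * w α / w θ - w α ≠ 0 := by
          have h : w α * w α / w θ - w α = w α * (w α - w θ) / w θ := by
            field_simp
          rw [h]
          exact div_ne_zero (mul_ne_zero hz' (sub_ne_zero.mpr (Ne.symm hz))) hx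
        simp only [g, w_reflect]
        rw [div_add_div _ _ hsub hsub2, div_eq_iff (mul_ne_zero hsub hsub2)]
        field_simp
        ring
      · rw [hF, Set.indicator_of_notMem hc,
          Set.indicator_of_notMem (fun h => hc (hmem.mp h)),
          Set.indicator_of_notMem hc]
        simp
  have h2 : (2:ℂ) * ∫ θ in (α-π)..(α+π), F θ
      = Complex.I * ∫ θ in (α-π)..(α+π), Set.indicator (Cset α ε) (fun _ => (1:ℂ)) θ := by
    have := intervalIntegral.integral_add hFint hFrefl_int
    calc (2:ℂ) * ∫ θ in (α-π)..(α+π), F θ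
        = (∫ θ in (α-π)..(α+π), F θ) + ∫ θ in (α-π)..(α+π), F (2*α - θ) := by
          rw [hrefl]; ring
      _ = ∫ θ in (α-π)..(α+π), (F θ + F (2*α - θ)) := this.symm
      _ = ∫ θ in (α-π)..(α+π), Complex.I * Set.indicator (Cset α ε) (fun _ => (1:ℂ)) θ := by
          simp only [hpt]
      _ = Complex.I * ∫ θ in (α-π)..(α+π), Set.indicator (Cset α ε) (fun _ => (1:ℂ)) θ := by
          rw [intervalIntegral.integral_const_mul]
  rw [h1]
  have h3 : (2:ℂ) ≠ 0 := two_ne_zero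
  field_simp
  linear_combination h2


lemma integral_exp_int (j : ℤ) (hj : j ≠ 0) :
    ∫ θ in (0:ℝ)..(2*π), Complex.exp ((j:ℂ) * (θ * Complex.I)) = 0 := by
  have h : ∀ θ:ℝ, (j:ℂ) * ((θ:ℂ) * Complex.I) = ((j:ℂ) * Complex.I) * θ := fun θ => by ring
  simp only [h]
  have hc : (j:ℂ) * Complex.I ≠ 0 :=
    mul_ne_zero (Int.cast_ne_zero.mpr hj) Complex.I_ne_zero
  rw [integral_exp_mul_complex hc]
  have h2 : (j:ℂ) * Complex.I * ((2:ℝ)*(π:ℝ) : ℝ) = (j : ℤ) * (2*(π:ℂ)*Complex.I) := by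
    push_cast; ring
  rw [h2, Complex.exp_int_mul_two_pi_mul_I]
  simp

/-- Main assembly lemma. -/
lemma main_general (α : ℝ) (n : ℤ) (r : ℝ → ℂ) (hr : Continuous r) (R : ℂ)
    (hR : ∫ θ in (0:ℝ)..(2*π), r θ = R)
    (hident : ∀ θ : ℝ, w θ ≠ w α →
      Complex.exp ((n:ℂ) * θ * Complex.I) * (Complex.I * w θ) / (w θ - w α)
        = (w α)^n * (g α θ) + r θ) :
    Tendsto
      (fun ε : ℝ => (2 * π * Complex.I)⁻¹ *
        ∫ θ in {θ : ℝ | θ ∈ Icc 0 (2 * π) ∧ ε ≤ ‖w θ - w α‖},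
          Complex.exp ((n : ℂ) * θ * Complex.I) * (Complex.I * w θ) / (w θ - w α))
      (nhdsWithin 0 (Ioi 0))
      (nhds ((2 * π * Complex.I)⁻¹ * ((w α)^n * (π * Complex.I) + R))) := by
  set f : ℝ → ℂ := fun θ =>
    Complex.exp ((n:ℂ) * θ * Complex.I) * (Complex.I * w θ) / (w θ - w α) with hf
  -- the integral over the set equals a sum of two interval integrals, for ε > 0
  have hstep : ∀ ε : ℝ, 0 < ε →
      (∫ θ in {θ : ℝ | θ ∈ Icc 0 (2 * π) ∧ ε ≤ ‖w θ - w α‖}, f θ)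
        = (w α)^n * (∫ θ in (0:ℝ)..(2*π), Set.indicator (Cset α ε) (g α) θ)
          + ∫ θ in (0:ℝ)..(2*π), Set.indicator (Cset α ε) r θ := by
    intro ε hε
    have hseteq : {θ : ℝ | θ ∈ Icc 0 (2 * π) ∧ ε ≤ ‖w θ - w α‖}
        = Icc 0 (2*π) ∩ Cset α ε := rfl
    rw [hseteq, ← MeasureTheory.setIntegral_indicator (measurableSet_Cset α ε),
      MeasureTheory.integral_Icc_eq_integral_Ioc,
      ← intervalIntegral.integral_of_le (by positivity : (0:ℝ) ≤ 2*π)]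
    have hind : Set.indicator (Cset α ε) f
        = fun θ => (w α)^n * Set.indicator (Cset α ε) (g α) θ
            + Set.indicator (Cset α ε) r θ := by
      funext θ
      by_cases hc : θ ∈ Cset α ε
      · rw [Set.indicator_of_mem hc, Set.indicator_of_mem hc, Set.indicator_of_mem hc]
        have hne : w θ ≠ w α := by
          intro h
          exact notmem_Cset hε h hc
        exact hident θ hne
      · rw [Set.indicator_of_notMem hc, Set.indicator_of_notMem hc,
          Set.indicator_of_notMem hc]
        simp
    rw [hind]
    have hint1 : IntervalIntegrable
        (fun θ => Set.indicator (Cset α ε) (g α) θ) volume 0 (2*π) :=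
      intervalIntegrable_of_bounded
        (((measurable_g α).indicator (measurableSet_Cset α ε)).aestronglyMeasurable.restrict)
        (norm_indicator_g_le α hε)
    have hint2 : IntervalIntegrable
        (fun θ => Set.indicator (Cset α ε) r θ) volume 0 (2*π) := by
      rw [intervalIntegrable_iff]
      exact (hr.intervalIntegrable 0 (2*π)).def'.indicator (measurableSet_Cset α ε)
    rw [intervalIntegral.integral_add (hint1.const_mul _) hint2,
      intervalIntegral.integral_const_mul]
  -- limits of the two pieces
  have hlim1 : Tendsto (fun ε : ℝ => ∫ θ in (0:ℝ)..(2*π), Set.indicator (Cset α ε) (g α) θ)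
      (nhdsWithin 0 (Ioi 0)) (nhds ((π : ℂ) * Complex.I)) := by
    have hK := tendsto_integral_indicator α (α-π) (α+π) (fun _ => (1:ℂ)) continuous_const
    have hKval : (∫ _ in (α-π)..(α+π), (1:ℂ)) = ((2*π : ℝ) : ℂ) := by
      rw [intervalIntegral.integral_const]
      have : (α+π) - (α-π) = 2*π := by ring
      rw [this]
      simp [Complex.real_smul]
    rw [hKval] at hK
    have h5 : Complex.I / 2 * ((2*π : ℝ) : ℂ) = (π : ℂ) * Complex.I := by
      push_cast; ring
    rw [← h5]
    apply Tendsto.congr' _ (hK.const_mul (Complex.I / 2))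
    filter_upwards [self_mem_nhdsWithin] with ε (hε : ε ∈ Ioi 0)
    exact (key α hε).symm
  have hlim2 : Tendsto (fun ε : ℝ => ∫ θ in (0:ℝ)..(2*π), Set.indicator (Cset α ε) r θ)
      (nhdsWithin 0 (Ioi 0)) (nhds R) := by
    rw [← hR]
    exact tendsto_integral_indicator α 0 (2*π) r hr
  have hmain := ((hlim1.const_mul ((w α)^n)).add hlim2).const_mul (2 * (π:ℂ) * Complex.I)⁻¹
  apply hmain.congr'
  filter_upwards [self_mem_nhdsWithin] with ε (hε : ε ∈ Ioi 0)
  rw [hstep ε hε]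


lemma continuous_cexp_lin (c : ℂ) :
    Continuous (fun θ : ℝ => Complex.exp (c * ((θ:ℂ) * Complex.I))) :=
  Complex.continuous_exp.comp (continuous_const.mul (Complex.continuous_ofReal.mul continuous_const))

-- case n ≥ 0
lemma case_nonneg (α : ℝ) (m : ℕ) {θ : ℝ} (hne : w θ ≠ w α) :
    Complex.exp (((m:ℤ):ℂ) * θ * Complex.I) * (Complex.I * w θ) / (w θ - w α)
      = (w α)^(m:ℤ) * (g α θ)
        + ∑ k ∈ Finset.range m,
            Complex.I * (w α)^(m-1-k) * Complex.exp ((((k+1:ℕ):ℤ):ℂ) * ((θ:ℂ) * Complex.I)) := by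
  have hx := w_ne_zero θ
  have hz := w_ne_zero α
  have hsub : w θ - w α ≠ 0 := sub_ne_zero.mpr hne
  have e1 : Complex.exp (((m:ℤ):ℂ) * θ * Complex.I) = (w θ)^m := by
    rw [mul_assoc, Complex.exp_int_mul, zpow_natCast]
    rfl
  have e3 : ∀ k : ℕ, Complex.exp ((((k+1:ℕ):ℤ):ℂ) * ((θ:ℂ) * Complex.I)) = (w θ)^(k+1) := by
    intro k
    rw [Complex.exp_int_mul, zpow_natCast]
    rfl
  simp only [e1, e3, zpow_natCast]
  have hs : ∑ k ∈ Finset.range m, Complex.I * (w α)^(m-1-k) * (w θ)^(k+1)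
      = Complex.I * w θ * ∑ k ∈ Finset.range m, (w θ)^k * (w α)^(m-1-k) := by
    rw [Finset.mul_sum]
    exact Finset.sum_congr rfl fun k _ => by ring
  rw [hs]
  have h := geom_sum₂_mul (w θ) (w α) m
  rw [g]
  rw [mul_div_assoc', div_add' _ _ _ hsub, div_left_inj' hsub]
  linear_combination (-(Complex.I * w θ)) * h

lemma integral_r_nonneg (α : ℝ) (m : ℕ) :
    ∫ θ in (0:ℝ)..(2*π), (∑ k ∈ Finset.range m,
        Complex.I * (w α)^(m-1-k) * Complex.exp ((((k+1:ℕ):ℤ):ℂ) * ((θ:ℂ) * Complex.I))) = 0 := by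
  rw [intervalIntegral.integral_finset_sum]
  · apply Finset.sum_eq_zero
    intro k _
    rw [intervalIntegral.integral_const_mul, integral_exp_int ((k+1:ℕ):ℤ) (by omega), mul_zero]
  · intro k _
    exact (continuous_const.mul (continuous_cexp_lin _)).intervalIntegrable _ _

-- case n < 0
lemma case_neg (α : ℝ) (n : ℤ) (hn : n < 0) {θ : ℝ} (hne : w θ ≠ w α) :
    Complex.exp ((n:ℂ) * θ * Complex.I) * (Complex.I * w θ) / (w θ - w α)
      = (w α)^n * (g α θ)
        + (- ∑ k ∈ Finset.range (-n).toNat,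
            Complex.I * ((w α)⁻¹)^((-n).toNat - k)
              * Complex.exp (((-(k:ℤ)):ℂ) * ((θ:ℂ) * Complex.I))) := by
  set m : ℕ := (-n).toNat with hm
  have hnm : n = -(m:ℤ) := by omega
  have hx := w_ne_zero θ
  have hz := w_ne_zero α
  have hsub : w θ - w α ≠ 0 := sub_ne_zero.mpr hne
  have e1 : Complex.exp ((n:ℂ) * θ * Complex.I) = ((w θ)⁻¹)^m := by
    rw [mul_assoc, Complex.exp_int_mul, hnm, zpow_neg, zpow_natCast, inv_pow]
    rfl
  have e2 : (w α)^n = ((w α)⁻¹)^m := by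
    rw [hnm, zpow_neg, zpow_natCast, inv_pow]
  have e3 : ∀ k : ℕ, Complex.exp (((-(k:ℤ)):ℂ) * ((θ:ℂ) * Complex.I)) = ((w θ)⁻¹)^k := by
    intro k
    rw [show ((-(k:ℤ)):ℂ) * ((θ:ℂ) * Complex.I)
        = (((-(k:ℤ)):ℤ):ℂ) * ((θ:ℂ) * Complex.I) by push_cast; ring]
    rw [Complex.exp_int_mul, zpow_neg, zpow_natCast, inv_pow]
    rfl
  simp only [e1, e2, e3]
  set a := (w θ)⁻¹ with ha
  set b := (w α)⁻¹ with hb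
  set S := ∑ k ∈ Finset.range m, a^k * b^(m-1-k) with hS
  have hs : ∑ k ∈ Finset.range m, Complex.I * b^(m-k) * a^k = Complex.I * b * S := by
    rw [hS, Finset.mul_sum]
    apply Finset.sum_congr rfl
    intro k hk
    have hk' : k < m := Finset.mem_range.mp hk
    have : m - k = (m-1-k)+1 := by omega
    rw [this, pow_succ]
    ring
  rw [hs]
  have h2 : a^m - b^m = S * (a - b) := (geom_sum₂_mul a b m).symm
  have expand : a^m * (Complex.I * w θ)/(w θ - w α) - b^m * (Complex.I * w θ)/(w θ - w α)
      = Complex.I * S * (((w θ)⁻¹ - (w α)⁻¹) * w θ / (w θ - w α)) := by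
    rw [ha, hb] at h2
    linear_combination ((Complex.I * w θ)/(w θ - w α)) * h2
  have hab : ((w θ)⁻¹ - (w α)⁻¹) * w θ / (w θ - w α) = -(w α)⁻¹ := by
    field_simp
    ring
  rw [hab] at expand
  rw [g]
  linear_combination expand

lemma integral_r_neg (α : ℝ) (m : ℕ) (hm : 0 < m) :
    ∫ θ in (0:ℝ)..(2*π), (- ∑ k ∈ Finset.range m,
        Complex.I * ((w α)⁻¹)^(m - k) * Complex.exp (((-(k:ℤ)):ℂ) * ((θ:ℂ) * Complex.I)))
      = -(2*(π:ℂ)*Complex.I) * ((w α)⁻¹)^m := by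
  rw [intervalIntegral.integral_neg, intervalIntegral.integral_finset_sum
    (f := fun k (θ : ℝ) => Complex.I * ((w α)⁻¹)^(m - k)
        * Complex.exp (((-(k:ℤ)):ℂ) * ((θ:ℂ) * Complex.I)))
    (fun k _ => (continuous_const.mul (continuous_cexp_lin _)).intervalIntegrable _ _)]
  rw [Finset.sum_eq_single_of_mem 0 (Finset.mem_range.mpr hm)]
  · simp only [Nat.cast_zero, neg_zero, Int.cast_zero, Complex.ofReal_zero, zero_mul,
      Complex.exp_zero, mul_one, Nat.sub_zero]
    rw [intervalIntegral.integral_const]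
    rw [sub_zero, Complex.real_smul]
    push_cast
    ring
  · intro k _ hk0
    have h0 := integral_exp_int (-(k:ℤ)) (by omega)
    push_cast at h0 ⊢
    rw [intervalIntegral.integral_const_mul, h0, mul_zero]

end HTaux

theorem hilbert_transform_on_fourier_modes (n : ℤ) (α : ℝ) :
    Tendsto
      (fun ε : ℝ => (2 * π * Complex.I)⁻¹ *
        ∫ θ in {θ : ℝ | θ ∈ Icc 0 (2 * π) ∧
            ε ≤ ‖Complex.exp (θ * Complex.I) - Complex.exp (α * Complex.I)‖},
          Complex.exp ((n : ℂ) * θ * Complex.I) * (Complex.I * Complex.exp (θ * Complex.I)) /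
            (Complex.exp (θ * Complex.I) - Complex.exp (α * Complex.I)))
      (nhdsWithin 0 (Ioi 0))
      (nhds (if 0 ≤ n then (1 / 2 : ℂ) * Complex.exp ((n : ℂ) * α * Complex.I)
        else -((1 / 2 : ℂ) * Complex.exp ((n : ℂ) * α * Complex.I)))) := by
  have hpi : ((π:ℝ):ℂ) ≠ 0 := Complex.ofReal_ne_zero.mpr Real.pi_ne_zero
  have hexpn : Complex.exp ((n : ℂ) * α * Complex.I) = (HTaux.w α)^n := by
    rw [mul_assoc, Complex.exp_int_mul]
    rfl
  rcases le_or_gt 0 n with hn | hn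
  · set m := n.toNat with hm
    have hnm : n = (m:ℤ) := (Int.toNat_of_nonneg hn).symm
    have hmain := HTaux.main_general α n
      (fun θ => ∑ k ∈ Finset.range m,
        Complex.I * (HTaux.w α)^(m-1-k) * Complex.exp ((((k+1:ℕ):ℤ):ℂ) * ((θ:ℂ) * Complex.I)))
      (continuous_finset_sum _ fun k _ =>
        continuous_const.mul (HTaux.continuous_cexp_lin _))
      0 (HTaux.integral_r_nonneg α m)
      (fun θ hθ => by rw [hnm]; exact HTaux.case_nonneg α m hθ)
    rw [if_pos hn]
    have hval : (1 / 2 : ℂ) * Complex.exp ((n : ℂ) * α * Complex.I)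
        = (2 * π * Complex.I)⁻¹ * ((HTaux.w α)^n * (π * Complex.I) + 0) := by
      rw [hexpn]
      field_simp
      ring
    rw [hval]
    exact hmain
  · set m := (-n).toNat with hm
    have hm0 : 0 < m := by omega
    have hmain := HTaux.main_general α n
      (fun θ => - ∑ k ∈ Finset.range m,
        Complex.I * ((HTaux.w α)⁻¹)^(m - k) * Complex.exp (((-(k:ℤ)):ℂ) * ((θ:ℂ) * Complex.I)))
      (by
        apply Continuous.neg
        exact continuous_finset_sum _ fun k _ =>
          continuous_const.mul (HTaux.continuous_cexp_lin _))
      (-(2*(π:ℂ)*Complex.I) * ((HTaux.w α)⁻¹)^m)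
      (HTaux.integral_r_neg α m hm0)
      (fun θ hθ => HTaux.case_neg α n hn hθ)
    rw [if_neg (not_le.mpr hn)]
    have hinvm : ((HTaux.w α)⁻¹)^m = (HTaux.w α)^n := by
      rw [show n = -(m:ℤ) by omega, zpow_neg, zpow_natCast, inv_pow]
    rw [hinvm] at hmain
    have hval : -((1 / 2 : ℂ) * Complex.exp ((n : ℂ) * α * Complex.I))
        = (2 * π * Complex.I)⁻¹ * ((HTaux.w α)^n * (π * Complex.I)
            + -(2*(π:ℂ)*Complex.I) * (HTaux.w α)^n) := by
      rw [hexpn]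
      field_simp
      ring
    rw [hval]
    exact hmain
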